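/- Let u be a tempered distribution on ℝ, let φ ∈ 𝓢(ℝ) be a Schwartz function, and let K ⊆ ℝ be a compact set. Then there exist N ∈ ℕ and C > 0 such that for all ε ∈ (0, 1] and all x ∈ K, |u(y ↦ ε⁻¹ φ((y − x)/ε))| ≤ C ε^{−N}. (Moderateness of the embedded distribution: the embedding ι(u) evaluated on scaled translated test objects grows at most polynomially in 1/ε, uniformly on compact sets.) -/

import Mathlib

open MeasureTheory SchwartzMap

/-- An affine map `y ↦ a * y + b` on `ℝ` has temperate growth. -/
lemma hasTemperateGrowth_affine (a b : ℝ) :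
    Function.HasTemperateGrowth (fun y : ℝ => a * y + b) := by
  apply Function.HasTemperateGrowth.of_fderiv (k := 1) (C := |a| + |b|)
  · have h : (fderiv ℝ fun y : ℝ => a * y + b) =
        fun _ : ℝ => ContinuousLinearMap.smulRight (1 : ℝ →L[ℝ] ℝ) a := by
      funext y
      have := (((hasDerivAt_id y).const_mul a).add_const b).hasFDerivAt.fderiv
      exact this.trans (by ext; simp)
    rw [h]
    exact .const _
  · exact fun y => (((hasDerivAt_id y).const_mul a).add_const b).differentiableAt
  · intro y
    have h1 : ‖a * y + b‖ ≤ |a| * |y| + |b| := by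
      simpa [abs_mul] using abs_add_le (a * y) b
    have h2 : (0:ℝ) ≤ |y| := abs_nonneg y
    have h3 : (0:ℝ) ≤ |a| := abs_nonneg a
    have h4 : (0:ℝ) ≤ |b| := abs_nonneg b
    calc ‖a * y + b‖ ≤ |a| * |y| + |b| := h1
      _ ≤ (|a| + |b|) * (1 + ‖y‖) ^ 1 := by
          simp only [pow_one, Real.norm_eq_abs]; nlinarith

/-- The scaled translated test function `y ↦ ε⁻¹ * φ ((y - x) / ε)` as a Schwartz function,
for `ε > 0`. -/
noncomputable def scaledTranslate (φ : 𝓢(ℝ, ℝ)) (x ε : ℝ) (hε : 0 < ε) : 𝓢(ℝ, ℝ) :=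
  ε⁻¹ • (SchwartzMap.compCLM ℝ (g := fun y : ℝ => (y - x) / ε)
    (by
      have heq : (fun y : ℝ => (y - x) / ε) = fun y : ℝ => ε⁻¹ * y + (-(x * ε⁻¹)) := by
        funext y; ring
      rw [heq]; exact hasTemperateGrowth_affine _ _)
    (⟨1, |x| + ε, fun y => by
      have h1 : |y| ≤ |x| + |y - x| := by
        calc |y| = |x + (y - x)| := by ring_nf
          _ ≤ |x| + |y - x| := abs_add_le _ _
      have h2 : |y - x| = ε * |(y - x) / ε| := by
        rw [abs_div, abs_of_pos hε]; field_simp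
      have h3 : (0:ℝ) ≤ |(y - x) / ε| := abs_nonneg _
      have h4 : (0:ℝ) ≤ |x| := abs_nonneg _
      simp only [Real.norm_eq_abs, pow_one]
      nlinarith⟩) φ)

@[simp] lemma scaledTranslate_apply (φ : 𝓢(ℝ, ℝ)) (x ε : ℝ) (hε : 0 < ε) (y : ℝ) :
    scaledTranslate φ x ε hε y = ε⁻¹ * φ ((y - x) / ε) := rfl

lemma norm_iteratedFDeriv_scaledTranslate (φ : 𝓢(ℝ, ℝ)) (x ε : ℝ) (hε : 0 < ε) (n : ℕ) (y : ℝ) :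
    ‖iteratedFDeriv ℝ n (scaledTranslate φ x ε hε) y‖
      = ε⁻¹ * (ε⁻¹) ^ n * ‖iteratedDeriv n (⇑φ) ((y - x) / ε)‖ := by
  have hg : ContDiff ℝ n (fun y : ℝ => φ ((y - x) / ε)) := by
    exact (φ.smooth n).comp ((contDiff_id.sub contDiff_const).div_const ε)
  have hcoe : ⇑(scaledTranslate φ x ε hε) = ε⁻¹ • (fun y : ℝ => φ ((y - x) / ε)) := by
    funext y; simp [smul_eq_mul]
  rw [hcoe, norm_iteratedFDeriv_eq_norm_iteratedDeriv]
  have h2 : iteratedDeriv n (ε⁻¹ • fun y : ℝ => φ ((y - x) / ε)) y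
      = ε⁻¹ • iteratedDeriv n (fun y : ℝ => φ ((y - x) / ε)) y := by
    rw [← iteratedDerivWithin_univ, ← iteratedDerivWithin_univ]
    exact iteratedDerivWithin_const_smul (Set.mem_univ y) uniqueDiffOn_univ ε⁻¹ hg.contDiffAt.contDiffWithinAt
  rw [h2]
  have h3 : (fun y : ℝ => φ ((y - x) / ε)) = fun y : ℝ => (fun z => φ (ε⁻¹ * z)) (y + (-x)) := by
    funext y; congr 1; field_simp; ring
  have h4 : iteratedDeriv n (fun y : ℝ => φ ((y - x) / ε)) y
      = ε⁻¹ ^ n * iteratedDeriv n (⇑φ) (ε⁻¹ * (y + -x)) := by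
    rw [h3]
    have h4a := iteratedDeriv_comp_add_const n (fun z : ℝ => φ (ε⁻¹ * z)) (-x)
    rw [h4a]
    rw [iteratedDeriv_comp_const_mul (φ.smooth n) ε⁻¹]
  rw [h4]
  have h5 : ε⁻¹ * (y + -x) = (y - x) / ε := by field_simp; ring
  rw [h5, smul_eq_mul, norm_mul, norm_mul]
  have e1 : ‖ε⁻¹‖ = ε⁻¹ := by rw [Real.norm_eq_abs, abs_of_pos (by positivity)]
  have e2 : ‖ε⁻¹ ^ n‖ = ε⁻¹ ^ n := by rw [Real.norm_eq_abs, abs_of_pos (by positivity)]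
  rw [e1, e2]; ring

/-- moderateness of embedded distributions. For a tempered distribution `u`,
a Schwartz function `φ` and a compact set `K ⊆ ℝ`, there are `N ∈ ℕ` and `C > 0` such that
`|u (y ↦ ε⁻¹ φ ((y - x)/ε))| ≤ C ε^(-N)` for all `ε ∈ (0,1]` and all `x ∈ K`. -/
theorem embedded_distribution_moderate (u : 𝓢(ℝ, ℝ) →L[ℝ] ℝ) (φ : 𝓢(ℝ, ℝ))
    (K : Set ℝ) (hK : IsCompact K) :
    ∃ (N : ℕ) (C : ℝ), 0 < C ∧ ∀ ε : ℝ, ∀ hε : ε ∈ Set.Ioc (0 : ℝ) 1, ∀ x ∈ K,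
      |u (scaledTranslate φ x ε hε.1)| ≤ C * ε ^ (-(N : ℤ)) := by
  -- the distribution is bounded by finitely many Schwartz seminorms
  set q : Seminorm ℝ 𝓢(ℝ, ℝ) := (normSeminorm ℝ ℝ).comp u.toLinearMap with hqdef
  have hqc : Continuous q := by
    show Continuous fun f : 𝓢(ℝ, ℝ) => ‖u f‖
    exact continuous_norm.comp u.continuous
  obtain ⟨s, C, hC0, hCs⟩ := Seminorm.bound_of_continuous (schwartz_withSeminorms ℝ ℝ ℝ) q hqc
  have hCpos : (0:ℝ) < (C:ℝ) := by
    have := pos_iff_ne_zero.mpr hC0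
    exact_mod_cast this
  -- bound K
  obtain ⟨R₀, hR₀⟩ := hK.isBounded.subset_closedBall 0
  set R : ℝ := max R₀ 0 with hRdef
  have hR : 0 ≤ R := le_max_right _ _
  have hKR : ∀ x ∈ K, |x| ≤ R := by
    intro x hx
    have := hR₀ hx
    rw [Metric.mem_closedBall, Real.dist_eq, sub_zero] at this
    exact this.trans (le_max_left _ _)
  set m1 : ℕ := s.sup Prod.fst with hm1
  set m2 : ℕ := s.sup Prod.snd with hm2
  set S : ℝ := (Finset.Iic (m1, m2)).sup (schwartzSeminormFamily ℝ ℝ ℝ) φ with hSdef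
  have hS : 0 ≤ S := apply_nonneg _ _
  set B : ℝ := (R + 1) ^ m1 * 2 ^ m1 * S + 1 with hBdef
  have hB : 0 < B := by positivity
  refine ⟨m2 + 1, (C:ℝ) * B, by positivity, ?_⟩
  intro ε hε x hx
  set ψ := scaledTranslate φ x ε hε.1 with hψdef
  have hε1 : (0:ℝ) < ε := hε.1
  have hεP : (0:ℝ) < ε ^ (-((m2:ℤ) + 1)) := by positivity
  have hNeq : (-((m2 + 1 : ℕ) : ℤ)) = -((m2:ℤ) + 1) := by push_cast; ring
  rw [hNeq]
  -- bound each seminorm of ψ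
  have hsup : (s.sup (schwartzSeminormFamily ℝ ℝ ℝ)) ψ ≤ B * ε ^ (-((m2:ℤ) + 1)) := by
    apply Seminorm.finset_sup_apply_le (by positivity)
    intro i hi
    have hik : i.1 ≤ m1 := Finset.le_sup (f := Prod.fst) hi
    have hin : i.2 ≤ m2 := Finset.le_sup (f := Prod.snd) hi
    apply SchwartzMap.seminorm_le_bound ℝ i.1 i.2 ψ (by positivity)
    intro y
    rw [hψdef, norm_iteratedFDeriv_scaledTranslate]
    set z : ℝ := (y - x) / ε with hzdef
    have hz0 : (0:ℝ) ≤ ‖z‖ := norm_nonneg z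
    have hD0 : (0:ℝ) ≤ ‖iteratedDeriv i.2 (⇑φ) z‖ := norm_nonneg _
    -- ‖y‖ ≤ (R+1)(1+‖z‖)
    have hy : ‖y‖ ≤ (R + 1) * (1 + ‖z‖) := by
      have h1 : y = x + ε * z := by rw [hzdef]; field_simp; ring
      have h2 : |y| ≤ |x| + ε * |z| := by
        rw [h1]
        calc |x + ε * z| ≤ |x| + |ε * z| := abs_add_le _ _
          _ = |x| + ε * |z| := by rw [abs_mul, abs_of_pos hε1]
      have h3 : |x| ≤ R := hKR x hx
      have h4 : ε ≤ 1 := hε.2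
      simp only [Real.norm_eq_abs] at *
      nlinarith [abs_nonneg z]
    have hεinv : (0:ℝ) ≤ ε⁻¹ := inv_nonneg.mpr hε1.le
    have hEnn : (0:ℝ) ≤ ε⁻¹ * ε⁻¹ ^ i.2 := mul_nonneg hεinv (pow_nonneg hεinv _)
    have hyk : ‖y‖ ^ i.1 ≤ (R + 1) ^ m1 * (1 + ‖z‖) ^ i.1 := by
      calc ‖y‖ ^ i.1 ≤ ((R + 1) * (1 + ‖z‖)) ^ i.1 :=
            pow_le_pow_left₀ (norm_nonneg y) hy i.1
        _ = (R + 1) ^ i.1 * (1 + ‖z‖) ^ i.1 := mul_pow _ _ _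
        _ ≤ (R + 1) ^ m1 * (1 + ‖z‖) ^ i.1 :=
            mul_le_mul_of_nonneg_right (pow_le_pow_right₀ (by linarith) hik) (by positivity)
    have hE : ε⁻¹ * ε⁻¹ ^ i.2 ≤ ε ^ (-((m2:ℤ) + 1)) := by
      have e : ε⁻¹ * ε⁻¹ ^ i.2 = ε ^ (-((i.2:ℤ) + 1)) := by
        rw [zpow_neg, show ((i.2:ℤ) + 1) = ((i.2 + 1 : ℕ) : ℤ) by push_cast; ring,
          zpow_natCast, pow_succ, mul_inv, inv_pow]
        ring
      rw [e]
      exact zpow_le_zpow_right_of_le_one₀ hε1 hε.2 (by omega)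
    have hA : (1 + ‖z‖) ^ i.1 * ‖iteratedDeriv i.2 (⇑φ) z‖ ≤ 2 ^ m1 * S := by
      have h := one_add_le_sup_seminorm_apply (𝕜 := ℝ) (m := (m1, m2)) hik hin φ z
      rwa [norm_iteratedFDeriv_eq_norm_iteratedDeriv] at h
    calc ‖y‖ ^ i.1 * (ε⁻¹ * ε⁻¹ ^ i.2 * ‖iteratedDeriv i.2 (⇑φ) z‖)
        ≤ (R + 1) ^ m1 * (1 + ‖z‖) ^ i.1 * (ε⁻¹ * ε⁻¹ ^ i.2 * ‖iteratedDeriv i.2 (⇑φ) z‖) :=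
          mul_le_mul_of_nonneg_right hyk (mul_nonneg hEnn hD0)
      _ = (R + 1) ^ m1 * (ε⁻¹ * ε⁻¹ ^ i.2) * ((1 + ‖z‖) ^ i.1 * ‖iteratedDeriv i.2 (⇑φ) z‖) := by
          ring
      _ ≤ (R + 1) ^ m1 * (ε⁻¹ * ε⁻¹ ^ i.2) * (2 ^ m1 * S) :=
          mul_le_mul_of_nonneg_left hA (mul_nonneg (by positivity) hEnn)
      _ = (R + 1) ^ m1 * 2 ^ m1 * S * (ε⁻¹ * ε⁻¹ ^ i.2) := by ring
      _ ≤ (R + 1) ^ m1 * 2 ^ m1 * S * ε ^ (-((m2:ℤ) + 1)) :=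
          mul_le_mul_of_nonneg_left hE (by positivity)
      _ ≤ B * ε ^ (-((m2:ℤ) + 1)) :=
          mul_le_mul_of_nonneg_right (by rw [hBdef]; linarith) hεP.le
  have h1 : |u ψ| = q ψ := by
    simp [hqdef, Seminorm.comp_apply, Real.norm_eq_abs]
  have h2 : q ψ ≤ (C:ℝ) * ((s.sup (schwartzSeminormFamily ℝ ℝ ℝ)) ψ) := by
    have := hCs ψ
    simpa [NNReal.smul_def] using this
  calc |u ψ| = q ψ := h1
    _ ≤ (C:ℝ) * ((s.sup (schwartzSeminormFamily ℝ ℝ ℝ)) ψ) := h2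
    _ ≤ (C:ℝ) * (B * ε ^ (-((m2:ℤ) + 1))) := mul_le_mul_of_nonneg_left hsup hCpos.le
    _ = (C:ℝ) * B * ε ^ (-((m2:ℤ) + 1)) := by ring
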